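/- Let α ∈ R and σ ∈ V⁰ with α + σ ∈ R. Then for every n ∈ ℤ, t̂_{α+nσ}^σ = t̂_α^σ, that is, ŵ_{α+(n+1)σ} ŵ_{α+nσ} = ŵ_{α+σ} ŵ_α. Moreover −α ∈ R and t̂_α^{−σ} = t̂_{−α}^σ, that is, ŵ_{α−σ} ŵ_α = ŵ_{−α+σ} ŵ_{−α}. -/

import Mathlib

/-- The reflection `s_α(u) = u - (u, α^∨) α` associated to a vector `α`, where
`α^∨ = 2α/(α,α)` and `B` is the bilinear form. -/
noncomputable def reflMap {V : Type*} [AddCommGroup V] [Module ℝ V] (B : V →ₗ[ℝ] V →ₗ[ℝ] ℝ)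
    (α : V) : V → V :=
  fun u => u - ((2 * B u α) / B α α) • α

/-- The defining relations of the presented group `Ŵ`: (I) `ŵ_α² = 1` and
(II) `ŵ_α ŵ_β ŵ_α = ŵ_{s_α(β)}` for `α, β ∈ R`. -/
def eawRels {V : Type*} [AddCommGroup V] [Module ℝ V] (B : V →ₗ[ℝ] V →ₗ[ℝ] ℝ)
    (R : Set V) : Set (FreeGroup R) :=
  {r | ∃ α : R, r = FreeGroup.of α * FreeGroup.of α} ∪
  {r | ∃ α β γ : R, (γ : V) = reflMap B (α : V) (β : V) ∧
        r = FreeGroup.of α * FreeGroup.of β * FreeGroup.of α * (FreeGroup.of γ)⁻¹}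

/-- The group `Ŵ` presented by generators `ŵ_α` (`α ∈ R`) and relations (I), (II). -/
abbrev EAW {V : Type*} [AddCommGroup V] [Module ℝ V] (B : V →ₗ[ℝ] V →ₗ[ℝ] ℝ)
    (R : Set V) :=
  PresentedGroup (eawRels B R)

/-- The generator `ŵ_α` of `Ŵ`. -/
def wgen {V : Type*} [AddCommGroup V] [Module ℝ V] (B : V →ₗ[ℝ] V →ₗ[ℝ] ℝ)
    (R : Set V) (α : V) (hα : α ∈ R) : EAW B R :=
  PresentedGroup.of (⟨α, hα⟩ : R)

/-- The element `t̂_α^σ = ŵ_{α+σ} ŵ_α` of `Ŵ`. -/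
def tgen {V : Type*} [AddCommGroup V] [Module ℝ V] (B : V →ₗ[ℝ] V →ₗ[ℝ] ℝ)
    (R : Set V) (α σ : V) (hα : α ∈ R) (hασ : α + σ ∈ R) : EAW B R :=
  wgen B R (α + σ) hασ * wgen B R α hα

section Aux

variable {V : Type*} [AddCommGroup V] [Module ℝ V] (B : V →ₗ[ℝ] V →ₗ[ℝ] ℝ) (R : Set V)

private lemma mk_rel_eq_one {r : FreeGroup R} (h : r ∈ eawRels B R) :
    PresentedGroup.mk (eawRels B R) r = 1 :=
  (QuotientGroup.eq_one_iff _).2 (Subgroup.subset_normalClosure h)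

private lemma wgen_congr {β γ : V} (h : β ∈ R) (h' : γ ∈ R) (e : β = γ) :
    wgen B R β h = wgen B R γ h' := by subst e; rfl

private lemma wgen_sq (β : V) (h : β ∈ R) : wgen B R β h * wgen B R β h = 1 := by
  have := mk_rel_eq_one B R (r := FreeGroup.of ⟨β, h⟩ * FreeGroup.of ⟨β, h⟩)
    (Or.inl ⟨⟨β, h⟩, rfl⟩)
  rw [map_mul] at this
  exact this

private lemma wgen_rel (a b c : V) (ha : a ∈ R) (hb : b ∈ R) (hc : c ∈ R)
    (e : c = reflMap B a b) :
    wgen B R a ha * wgen B R b hb * wgen B R a ha = wgen B R c hc := by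
  have h : (FreeGroup.of (⟨a, ha⟩ : R) * FreeGroup.of (⟨b, hb⟩ : R) *
      FreeGroup.of (⟨a, ha⟩ : R) * (FreeGroup.of (⟨c, hc⟩ : R))⁻¹) ∈ eawRels B R :=
    Or.inr ⟨⟨a, ha⟩, ⟨b, hb⟩, ⟨c, hc⟩, e, rfl⟩
  have h2 := mk_rel_eq_one B R h
  rw [map_mul, map_mul, map_mul, map_inv, mul_inv_eq_one] at h2
  exact h2

private lemma refl_self (β : V) (hβ : B β β ≠ 0) : reflMap B β β = -β := by
  unfold reflMap
  rw [mul_div_assoc, div_self hβ, mul_one]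
  module

private lemma wgen_neg (β : V) (h : β ∈ R) (hβ : B β β ≠ 0) (h' : -β ∈ R) :
    wgen B R (-β) h' = wgen B R β h := by
  have := wgen_rel B R β β (-β) h h h' (refl_self B β hβ).symm
  rw [mul_assoc, wgen_sq, mul_one] at this
  exact this.symm

/-- Purely group-theoretic heart of the translation lemma. -/
private lemma claim_aux {G : Type*} [Group G] (w : ℤ → G)
    (wsq : ∀ n, w n * w n = 1)
    (wkey : ∀ m k, w m * w k * w m = w (2 * m - k)) :
    ∀ n : ℤ, w (n + 1) * w n = w 1 * w 0 := by
  intro n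
  induction n using Int.induction_on with
  | zero => norm_num
  | succ n ih =>
    have h2 : w (↑n + 1 + 1) = w (↑n + 1) * w ↑n * w (↑n + 1) := by
      rw [wkey]; congr 1; ring
    rw [h2, mul_assoc (w (↑n + 1) * w ↑n), wsq, mul_one]; exact ih
  | pred n ih =>
    have h2 : w (-↑n - 1) = w (-↑n) * w (-↑n + 1) * w (-↑n) := by
      rw [wkey]; congr 1; ring
    have e : (-(n : ℤ) - 1 + 1) = -(n : ℤ) := by ring
    rw [e, h2, ← mul_assoc, ← mul_assoc, wsq, one_mul]; exact ih

end Aux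

/-- For `α ∈ R` and `σ` in the radical with `α + σ ∈ R`: for every `n ∈ ℤ`,
`t̂_{α+nσ}^σ = t̂_α^σ`, i.e. `ŵ_{α+(n+1)σ} ŵ_{α+nσ} = ŵ_{α+σ} ŵ_α`.  Moreover `−α ∈ R`
and `t̂_α^{−σ} = t̂_{−α}^σ`, i.e. `ŵ_{α−σ} ŵ_α = ŵ_{−α+σ} ŵ_{−α}`. -/
theorem tgen_translate {V : Type*} [AddCommGroup V] [Module ℝ V]
    (B : V →ₗ[ℝ] V →ₗ[ℝ] ℝ) (R : Set V)
    (hsym : ∀ u v : V, B u v = B v u)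
    (hpsd : ∀ v : V, 0 ≤ B v v)
    (hnon : ∀ α ∈ R, B α α ≠ 0)
    (hclos : ∀ α ∈ R, ∀ β ∈ R, reflMap B α β ∈ R)
    (α σ : V) (hα : α ∈ R) (hσ : ∀ u : V, B σ u = 0) (hασ : α + σ ∈ R) :
    (∀ n : ℤ, ∃ (h1 : α + (n + 1) • σ ∈ R) (h2 : α + n • σ ∈ R),
        wgen B R (α + (n + 1) • σ) h1 * wgen B R (α + n • σ) h2 =
          wgen B R (α + σ) hασ * wgen B R α hα) ∧
      ∃ (hneg : -α ∈ R) (h3 : α - σ ∈ R) (h4 : -α + σ ∈ R),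
        wgen B R (α - σ) h3 * wgen B R α hα =
          wgen B R (-α + σ) h4 * wgen B R (-α) hneg := by
  have hne : B α α ≠ 0 := hnon α hα
  have hBu : ∀ u : V, B u σ = 0 := fun u => (hsym u σ).trans (hσ u)
  have hBB : ∀ a b : ℝ, B (α + a • σ) (α + b • σ) = B α α := by
    intro a b
    simp [map_add, map_smul, LinearMap.add_apply, LinearMap.smul_apply, hσ, hBu]
  -- reflection computation
  have lem1 : ∀ a b : ℝ, reflMap B (α + b • σ) (α + a • σ) = -(α + (2 * b - a) • σ) := by
    intro a b
    unfold reflMap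
    rw [hBB, hBB, mul_div_assoc, div_self hne, mul_one]
    module
  -- membership facts
  have neg_mem : ∀ β ∈ R, -β ∈ R := by
    intro β hβ
    have := hclos β hβ β hβ
    rwa [refl_self B β (hnon β hβ)] at this
  have step : ∀ a b : ℝ, α + a • σ ∈ R → α + b • σ ∈ R → α + (2 * b - a) • σ ∈ R := by
    intro a b ha hb
    have h1 := hclos _ hb _ ha
    rw [lem1 a b] at h1
    have h2 := neg_mem _ h1
    rwa [neg_neg] at h2
  have hP0 : α + (0 : ℝ) • σ ∈ R := by simpa using hα
  have hP1 : α + (1 : ℝ) • σ ∈ R := by simpa using hασ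
  have pair : ∀ n : ℕ, (α + (n : ℝ) • σ ∈ R) ∧ (α + ((n : ℝ) + 1) • σ ∈ R) := by
    intro n
    induction n with
    | zero => exact ⟨by simpa using hα, by simpa using hασ⟩
    | succ n ih =>
      refine ⟨by push_cast; exact ih.2, ?_⟩
      have h := step (n : ℝ) ((n : ℝ) + 1) ih.1 ih.2
      have e : (2 * ((n : ℝ) + 1) - (n : ℝ)) = ((n + 1 : ℕ) : ℝ) + 1 := by push_cast; ring
      rwa [e] at h
  have hPint : ∀ n : ℤ, α + ((n : ℤ) : ℝ) • σ ∈ R := by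
    intro n
    rcases le_or_gt 0 n with h | h
    · have := (pair n.toNat).1
      rwa [show ((n.toNat : ℕ) : ℝ) = ((n : ℤ) : ℝ) by
        exact_mod_cast Int.toNat_of_nonneg h] at this
    · have h1 := (pair (-n).toNat).1
      have e1 : (((-n).toNat : ℕ) : ℝ) = -((n : ℤ) : ℝ) := by
        have h' : ((-n).toNat : ℤ) = -n := Int.toNat_of_nonneg (by omega)
        exact_mod_cast h'
      rw [e1] at h1
      have h2 := step _ 0 h1 hP0
      rwa [show (2 * (0 : ℝ) - -((n : ℤ) : ℝ)) = ((n : ℤ) : ℝ) by ring] at h2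
  -- key group relation
  have key : ∀ (a b : ℝ) (ha : α + a • σ ∈ R) (hb : α + b • σ ∈ R),
      wgen B R (α + a • σ) ha * wgen B R (α + b • σ) hb * wgen B R (α + a • σ) ha =
        wgen B R (α + (2 * a - b) • σ) (step b a hb ha) := by
    intro a b ha hb
    have hneg : -(α + (2 * a - b) • σ) ∈ R := by
      have := hclos _ ha _ hb
      rwa [lem1 b a] at this
    have h1 := wgen_rel B R _ _ _ ha hb hneg (lem1 b a).symm
    rw [h1]
    exact wgen_neg B R _ (step b a hb ha) (by rw [hBB]; exact hne) hneg
  -- the translation claim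
  have wsq : ∀ n : ℤ, wgen B R (α + ((n : ℤ) : ℝ) • σ) (hPint n) *
      wgen B R (α + ((n : ℤ) : ℝ) • σ) (hPint n) = 1 := fun n => wgen_sq B R _ _
  have wkey : ∀ m k : ℤ, wgen B R (α + ((m : ℤ) : ℝ) • σ) (hPint m) *
      wgen B R (α + ((k : ℤ) : ℝ) • σ) (hPint k) *
      wgen B R (α + ((m : ℤ) : ℝ) • σ) (hPint m) =
      wgen B R (α + (((2 * m - k : ℤ) : ℤ) : ℝ) • σ) (hPint (2 * m - k)) := by
    intro m k
    have h := key ((m : ℤ) : ℝ) ((k : ℤ) : ℝ) (hPint m) (hPint k)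
    rw [h]
    refine wgen_congr B R _ _ ?_
    have : (2 * ((m : ℤ) : ℝ) - ((k : ℤ) : ℝ)) = (((2 * m - k : ℤ) : ℤ) : ℝ) := by
      push_cast; ring
    rw [this]
  have claim : ∀ n : ℤ, wgen B R (α + (((n + 1 : ℤ) : ℤ) : ℝ) • σ) (hPint (n + 1)) *
      wgen B R (α + ((n : ℤ) : ℝ) • σ) (hPint n) =
      wgen B R (α + (((1 : ℤ) : ℤ) : ℝ) • σ) (hPint 1) *
      wgen B R (α + (((0 : ℤ) : ℤ) : ℝ) • σ) (hPint 0) :=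
    fun n => claim_aux (fun n => wgen B R (α + ((n : ℤ) : ℝ) • σ) (hPint n)) wsq wkey n
  constructor
  · intro n
    have e1 : α + (n + 1) • σ = α + (((n + 1 : ℤ) : ℤ) : ℝ) • σ := by
      rw [Int.cast_smul_eq_zsmul]
    have e2 : α + n • σ = α + ((n : ℤ) : ℝ) • σ := by
      rw [Int.cast_smul_eq_zsmul]
    refine ⟨by rw [e1]; exact hPint (n + 1), by rw [e2]; exact hPint n, ?_⟩
    rw [wgen_congr B R _ (hPint (n + 1)) e1, wgen_congr B R _ (hPint n) e2, claim n,
      wgen_congr B R (hPint 1) hασ (by norm_num),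
      wgen_congr B R (hPint 0) hα (by norm_num)]
  · have hnegα : -α ∈ R := neg_mem α hα
    have h3 : α - σ ∈ R := by
      have h := hPint (-1)
      rwa [show α + (((-1 : ℤ) : ℤ) : ℝ) • σ = α - σ by push_cast; module] at h
    have h4 : -α + σ ∈ R := by
      have h := neg_mem _ h3
      rwa [show -(α - σ) = -α + σ by module] at h
    refine ⟨hnegα, h3, h4, ?_⟩
    have hB3 : B (α - σ) (α - σ) ≠ 0 := by
      have e : α - σ = α + (-1 : ℝ) • σ := by module
      rw [e, hBB]; exact hne
    rw [wgen_congr B R h4 (neg_mem _ h3) (by module : -α + σ = -(α - σ)),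
      wgen_neg B R (α - σ) h3 hB3 (neg_mem _ h3),
      wgen_neg B R α hα hne hnegα]
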